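/- For the group H = (ℤ/p)^r with p prime, the dimension over F_p of the quotient Δ^k/Δ^{k+1} of consecutive powers of the augmentation ideal Δ of F_p[(ℤ/p)^r] equals the coefficient of x^k in the polynomial (1+x+...+x^{p-1})^r, for every k ≥ 0. -/

import Mathlib

open Polynomial

/-- The augmentation ideal of the group algebra `F_p[H]`. -/
noncomputable def augIdeal (p : ℕ) (H : Type*) [Group H] :
    Ideal (MonoidAlgebra (ZMod p) H) :=
  RingHom.ker ((MonoidAlgebra.lift (ZMod p) (ZMod p) H) 1)

/-- `dim_{F_p} Δ^k/Δ^{k+1}`, computed as a difference of dimensions. -/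
noncomputable def lambda (p : ℕ) (H : Type*) [Group H] (k : ℕ) : ℕ :=
  Module.finrank (ZMod p) (((augIdeal p H) ^ k).restrictScalars (ZMod p))
    - Module.finrank (ZMod p) (((augIdeal p H) ^ (k + 1)).restrictScalars (ZMod p))

open MonoidAlgebra

noncomputable section Aux

variable (p : ℕ) [Fact p.Prime] (r : ℕ)

abbrev Hh := Multiplicative (Fin r → ZMod p)
abbrev Aa := MonoidAlgebra (ZMod p) (Hh p r)

def gg (i : Fin r) : Hh p r := Multiplicative.ofAdd (Pi.single i 1)

lemma gg_pow_p (i : Fin r) : gg p r i ^ p = 1 := by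
  show Multiplicative.ofAdd (Pi.single i 1) ^ p = 1
  rw [← ofAdd_nsmul]
  have : (p • Pi.single i (1:ZMod p) : Fin r → ZMod p) = 0 := by
    rw [← Pi.single_smul]; simp [nsmul_eq_mul, ZMod.natCast_self]
  rw [this]; rfl

def eps (i : Fin r) : Aa p r := MonoidAlgebra.single (gg p r i) 1 - 1

instance : CharP (Aa p r) p := by
  have : Function.Injective (algebraMap (ZMod p) (Aa p r)) := by
    intro a b h
    have := congrArg (fun f => f.coeff (1 : Hh p r)) h
    simpa [MonoidAlgebra.coe_algebraMap, MonoidAlgebra.coeff_single, Finsupp.single_apply] using this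
  exact charP_of_injective_algebraMap this p

lemma eps_pow_p (i : Fin r) : (eps p r i) ^ p = 0 := by
  have hp : p.Prime := Fact.out
  rw [eps, sub_pow_char, MonoidAlgebra.single_pow, one_pow, gg_pow_p, one_pow,
    ← MonoidAlgebra.one_def]
  simp

lemma single_eq_prod (a : Fin r → ZMod p) :
    (MonoidAlgebra.single (Multiplicative.ofAdd a) (1 : ZMod p) : Aa p r)
      = ∏ i, (MonoidAlgebra.single (gg p r i) (1 : ZMod p)) ^ (a i).val := by
  have key : (∏ i, gg p r i ^ (a i).val) = Multiplicative.ofAdd a := by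
    show Multiplicative.ofAdd (∑ i, (a i).val • Pi.single i (1 : ZMod p)) = _
    congr 1
    have : ∀ i, ((a i).val • Pi.single i (1 : ZMod p) : Fin r → ZMod p)
        = Pi.single i (a i) := by
      intro i; rw [← Pi.single_smul]; simp [nsmul_eq_mul, ZMod.natCast_val, ZMod.cast_id]
    simp_rw [this]
    exact Finset.univ_sum_single a
  calc (MonoidAlgebra.single (Multiplicative.ofAdd a) (1 : ZMod p) : Aa p r)
      = MonoidAlgebra.of (ZMod p) (Hh p r) (∏ i, gg p r i ^ (a i).val) := by rw [key]; rfl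
    _ = ∏ i, (MonoidAlgebra.single (gg p r i) (1:ZMod p)) ^ (a i).val := by
        rw [map_prod]; simp [MonoidAlgebra.of_apply]

/-- monomials in the `eps i`. -/
def mm (e : Fin r → ℕ) : Aa p r := ∏ i, eps p r i ^ e i

lemma mm_zero : mm p r 0 = 1 := by simp [mm]

lemma mm_mul (e e' : Fin r → ℕ) : mm p r e * mm p r e' = mm p r (e + e') := by
  simp [mm, ← Finset.prod_mul_distrib, pow_add]

lemma mm_single (i : Fin r) : mm p r (Pi.single i 1) = eps p r i := by
  rw [mm, Finset.prod_eq_single i] <;> simp +contextual [Pi.single_apply]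

/-- generators of the span giving `Δ^k`. -/
def Msp (k : ℕ) : Set (Aa p r) := mm p r '' {e | k ≤ ∑ i, e i}

lemma mm_mem_Msp {k : ℕ} {e : Fin r → ℕ} (h : k ≤ ∑ i, e i) : mm p r e ∈ Msp p r k :=
  ⟨e, h, rfl⟩

lemma mul_span {k : ℕ} {x y : Aa p r} (hx : x ∈ Submodule.span (ZMod p) (Msp p r 0))
    (hy : y ∈ Submodule.span (ZMod p) (Msp p r k)) :
    x * y ∈ Submodule.span (ZMod p) (Msp p r k) := by
  induction hx using Submodule.span_induction with
  | mem x hx =>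
    induction hy using Submodule.span_induction with
    | mem y hy =>
      obtain ⟨e, _, rfl⟩ := hx
      obtain ⟨e', he', rfl⟩ := hy
      rw [mm_mul]
      refine Submodule.subset_span (mm_mem_Msp p r ?_)
      simp only [Pi.add_apply, Finset.sum_add_distrib]
      exact he'.trans (Nat.le_add_left _ _)
    | zero => simp
    | add y z _ _ hy hz => rw [mul_add]; exact add_mem hy hz
    | smul c y _ hy => rw [mul_smul_comm]; exact Submodule.smul_mem _ _ hy
  | zero => simp
  | add x z _ _ hx hz => rw [add_mul]; exact add_mem hx hz
  | smul c x _ hx => rw [smul_mul_assoc]; exact Submodule.smul_mem _ _ hx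

lemma span0_top : Submodule.span (ZMod p) (Msp p r 0) = ⊤ := by
  rw [Submodule.eq_top_iff']
  intro x
  induction x using MonoidAlgebra.induction_on with
  | of g =>
    show MonoidAlgebra.single g 1 ∈ _
    obtain ⟨a, rfl⟩ : ∃ a, Multiplicative.ofAdd a = g := ⟨g, rfl⟩
    rw [single_eq_prod]
    have h1 : ∀ i : Fin r, (MonoidAlgebra.single (gg p r i) (1:ZMod p) : Aa p r)
        ∈ Submodule.span (ZMod p) (Msp p r 0) := by
      intro i
      have : (MonoidAlgebra.single (gg p r i) (1:ZMod p) : Aa p r) = 1 + eps p r i := by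
        rw [eps]; ring
      rw [this, ← mm_zero, ← mm_single]
      exact add_mem (Submodule.subset_span (mm_mem_Msp p r (by simp)))
        (Submodule.subset_span (mm_mem_Msp p r (by simp)))
    -- products and powers stay in the span, by `mul_span`
    have hpow : ∀ (z : Aa p r), z ∈ Submodule.span (ZMod p) (Msp p r 0) → ∀ n : ℕ,
        z ^ n ∈ Submodule.span (ZMod p) (Msp p r 0) := by
      intro z hz n
      induction n with
      | zero => simpa [← mm_zero] using Submodule.subset_span (mm_mem_Msp p r (by simp))
      | succ n ih => rw [pow_succ]; exact mul_span p r ih hz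
    have hone : (1 : Aa p r) ∈ Submodule.span (ZMod p) (Msp p r 0) := by
      simpa [← mm_zero] using Submodule.subset_span (mm_mem_Msp p r (by simp))
    refine Finset.prod_induction _ _ (fun a b ha hb => mul_span p r ha hb) hone ?_
    intro i _
    exact hpow _ (h1 i) _
  | add f g hf hg => exact add_mem hf hg
  | smul c f hf => exact Submodule.smul_mem _ _ hf


/-- the span of `Msp k` is an ideal. -/
def SIdeal (k : ℕ) : Ideal (Aa p r) where
  carrier := Submodule.span (ZMod p) (Msp p r k)
  add_mem' := fun h1 h2 => add_mem h1 h2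
  zero_mem' := zero_mem _
  smul_mem' := fun c x hx => by
    rw [smul_eq_mul]
    exact mul_span p r (by rw [span0_top]; trivial) hx

lemma SIdeal_restrict (k : ℕ) :
    (SIdeal p r k).restrictScalars (ZMod p) = Submodule.span (ZMod p) (Msp p r k) := by
  ext x; exact Iff.rfl

/-- the augmentation map. -/
def aug : Aa p r →ₐ[ZMod p] ZMod p :=
  (MonoidAlgebra.lift (ZMod p) (ZMod p) (Hh p r)) 1

lemma aug_single (h : Hh p r) (c : ZMod p) : aug p r (MonoidAlgebra.single h c) = c := by
  show ((MonoidAlgebra.lift (ZMod p) (ZMod p) (Hh p r)) 1) (MonoidAlgebra.single h c) = c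
  rw [MonoidAlgebra.lift_single]
  simp

lemma aug_eps (i : Fin r) : aug p r (eps p r i) = 0 := by
  rw [eps, map_sub, map_one, aug_single, sub_self]

lemma mem_augIdeal_iff (x : Aa p r) : x ∈ augIdeal p (Hh p r) ↔ aug p r x = 0 :=
  Iff.rfl

lemma aug_mm {e : Fin r → ℕ} (he : e ≠ 0) : aug p r (mm p r e) = 0 := by
  obtain ⟨i, hi⟩ : ∃ i, e i ≠ 0 := by
    by_contra h; push_neg at h; exact he (funext h)
  rw [mm, map_prod]
  refine Finset.prod_eq_zero (Finset.mem_univ i) ?_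
  rw [map_pow, aug_eps, zero_pow hi]

lemma sub_aug_mem (x : Aa p r) :
    x - (aug p r x) • 1 ∈ Submodule.span (ZMod p) (Msp p r 1) := by
  have hx : x ∈ Submodule.span (ZMod p) (Msp p r 0) := by rw [span0_top]; trivial
  induction hx using Submodule.span_induction with
  | mem x hx =>
    obtain ⟨e, _, rfl⟩ := hx
    by_cases he : e = 0
    · subst he; rw [mm_zero, map_one, one_smul, sub_self]; exact zero_mem _
    · rw [aug_mm p r he, zero_smul, sub_zero]
      refine Submodule.subset_span (mm_mem_Msp p r ?_)
      obtain ⟨i, hi⟩ : ∃ i, e i ≠ 0 := by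
        by_contra h; push_neg at h; exact he (funext h)
      calc 1 ≤ e i := Nat.one_le_iff_ne_zero.2 hi
        _ ≤ ∑ j, e j := Finset.single_le_sum (fun j _ => Nat.zero_le _) (Finset.mem_univ i)
  | zero => simpa using zero_mem _
  | add a b _ _ ha hb =>
    have : a + b - aug p r (a + b) • 1 = (a - aug p r a • 1) + (b - aug p r b • 1) := by
      rw [map_add, add_smul]; ring
    rw [this]; exact add_mem ha hb
  | smul c a _ ha =>
    have : c • a - aug p r (c • a) • 1 = c • (a - aug p r a • 1) := by
      rw [smul_sub, map_smul, smul_smul, smul_eq_mul]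
    rw [this]; exact Submodule.smul_mem _ _ ha

lemma augIdeal_le : augIdeal p (Hh p r) ≤ SIdeal p r 1 := by
  intro x hx
  have h0 : aug p r x = 0 := hx
  have := sub_aug_mem p r x
  rw [h0, zero_smul, sub_zero] at this
  exact this

lemma eps_mem (i : Fin r) : eps p r i ∈ augIdeal p (Hh p r) := aug_eps p r i

lemma mm_mem_pow (e : Fin r → ℕ) (k : ℕ) (h : k ≤ ∑ i, e i) :
    mm p r e ∈ augIdeal p (Hh p r) ^ k := by
  refine Ideal.pow_le_pow_right h ?_
  rw [← Finset.prod_pow_eq_pow_sum, mm]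
  exact Ideal.prod_mem_prod fun i _ => Ideal.pow_mem_pow (eps_mem p r i) _

lemma pow_eq_SIdeal (k : ℕ) : augIdeal p (Hh p r) ^ k = SIdeal p r k := by
  refine le_antisymm ?_ ?_
  · induction k with
    | zero =>
      intro x _
      show x ∈ Submodule.span (ZMod p) (Msp p r 0)
      rw [span0_top]; trivial
    | succ k ih =>
      rw [pow_succ]
      rw [Ideal.mul_le]
      intro a ha b hb
      have ha' : a ∈ Submodule.span (ZMod p) (Msp p r k) := ih ha
      have hb' : b ∈ Submodule.span (ZMod p) (Msp p r 1) := augIdeal_le p r hb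
      show a * b ∈ Submodule.span (ZMod p) (Msp p r (k+1))
      clear ha hb
      induction ha' using Submodule.span_induction with
      | mem a ha =>
        induction hb' using Submodule.span_induction with
        | mem b hb =>
          obtain ⟨e, he, rfl⟩ := ha
          obtain ⟨e', he', rfl⟩ := hb
          rw [mm_mul]
          refine Submodule.subset_span (mm_mem_Msp p r ?_)
          simp only [Pi.add_apply, Finset.sum_add_distrib]
          exact Nat.add_le_add he he'
        | zero => simp
        | add y z _ _ hy hz => rw [mul_add]; exact add_mem hy hz
        | smul c y _ hy => rw [mul_smul_comm]; exact Submodule.smul_mem _ _ hy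
      | zero => simp
      | add x z _ _ hx hz => rw [add_mul]; exact add_mem hx hz
      | smul c x _ hx => rw [smul_mul_assoc]; exact Submodule.smul_mem _ _ hx
  · intro x hx
    have hx' : x ∈ Submodule.span (ZMod p) (Msp p r k) := hx
    clear hx
    induction hx' using Submodule.span_induction with
    | mem x hxx => obtain ⟨e, he, rfl⟩ := hxx; exact mm_mem_pow p r e k he
    | zero => exact zero_mem _
    | add a b _ _ ha hb => exact add_mem ha hb
    | smul c a _ ha => exact Submodule.smul_of_tower_mem _ c ha


lemma finrank_Aa : Module.finrank (ZMod p) (Aa p r) = p ^ r := by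
  have B : Module.Basis (Hh p r) (ZMod p) (Aa p r) := MonoidAlgebra.basis (Hh p r) (ZMod p)
  rw [Module.finrank_eq_card_basis B]
  simp [Fintype.card_fun, ZMod.card p]

/-- the monomial basis family. -/
def BB (e : Fin r → Fin p) : Aa p r := mm p r (fun i => (e i : ℕ))

lemma mm_eq_zero {e : Fin r → ℕ} (h : ∃ i, p ≤ e i) : mm p r e = 0 := by
  obtain ⟨i, hi⟩ := h
  exact Finset.prod_eq_zero (Finset.mem_univ i)
    (pow_eq_zero_of_le hi (eps_pow_p p r i))

lemma mm_eq_BB {e : Fin r → ℕ} (h : ∀ i, e i < p) :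
    mm p r e = BB p r (fun i => ⟨e i, h i⟩) := rfl

lemma top_le_span_BB : ⊤ ≤ Submodule.span (ZMod p) (Set.range (BB p r)) := by
  rw [← span0_top]
  refine Submodule.span_le.2 ?_
  rintro x ⟨e, -, rfl⟩
  by_cases h : ∀ i, e i < p
  · exact Submodule.subset_span ⟨_, (mm_eq_BB p r h).symm⟩
  · push_neg at h
    rw [mm_eq_zero p r (by simpa using h)]
    exact zero_mem _

lemma card_fun_fin : Fintype.card (Fin r → Fin p) = Module.finrank (ZMod p) (Aa p r) := by
  rw [finrank_Aa]; simp [Fintype.card_fun]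

def Bbasis : Module.Basis (Fin r → Fin p) (ZMod p) (Aa p r) :=
  basisOfTopLeSpanOfCardEqFinrank (BB p r) (top_le_span_BB p r) (card_fun_fin p r)

lemma Bbasis_apply (e : Fin r → Fin p) : Bbasis p r e = BB p r e := by
  rw [Bbasis, coe_basisOfTopLeSpanOfCardEqFinrank]

lemma linearIndependent_BB : LinearIndependent (ZMod p) (BB p r) := by
  have := (Bbasis p r).linearIndependent
  rwa [show ⇑(Bbasis p r) = BB p r from funext (Bbasis_apply p r)] at this

/-- restriction of the family to degree at least `k`. -/
lemma span_Msp_eq (k : ℕ) :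
    Submodule.span (ZMod p) (Msp p r k)
      = Submodule.span (ZMod p)
          (Set.range fun e : {e : Fin r → Fin p // k ≤ ∑ i, (e i : ℕ)} => BB p r e.1) := by
  apply le_antisymm <;> refine Submodule.span_le.2 ?_
  · rintro x ⟨e, he, rfl⟩
    by_cases h : ∀ i, e i < p
    · refine Submodule.subset_span ⟨⟨fun i => ⟨e i, h i⟩, ?_⟩, (mm_eq_BB p r h).symm⟩
      simpa using he
    · push_neg at h
      rw [mm_eq_zero p r (by simpa using h)]
      exact zero_mem _
  · rintro x ⟨⟨e, he⟩, rfl⟩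
    exact Submodule.subset_span (mm_mem_Msp p r he)

lemma finrank_pow (k : ℕ) :
    Module.finrank (ZMod p) ((augIdeal p (Hh p r) ^ k).restrictScalars (ZMod p))
      = Fintype.card {e : Fin r → Fin p // k ≤ ∑ i, (e i : ℕ)} := by
  have h1 : (augIdeal p (Hh p r) ^ k).restrictScalars (ZMod p)
      = Submodule.span (ZMod p)
          (Set.range fun e : {e : Fin r → Fin p // k ≤ ∑ i, (e i : ℕ)} => BB p r e.1) := by
    rw [pow_eq_SIdeal, SIdeal_restrict, span_Msp_eq]
  rw [h1]
  exact finrank_span_eq_card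
    ((linearIndependent_BB p r).comp Subtype.val Subtype.val_injective)


lemma lambda_eq_card (k : ℕ) :
    lambda p (Hh p r) k
      = (Finset.univ.filter fun e : Fin r → Fin p => ∑ i, (e i : ℕ) = k).card := by
  have hsub : (Finset.univ.filter fun e : Fin r → Fin p => k + 1 ≤ ∑ i, (e i : ℕ))
      ⊆ (Finset.univ.filter fun e : Fin r → Fin p => k ≤ ∑ i, (e i : ℕ)) := by
    intro e he
    simp only [Finset.mem_filter] at he ⊢
    exact ⟨he.1, by omega⟩
  rw [lambda, finrank_pow, finrank_pow, Fintype.card_subtype, Fintype.card_subtype,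
    ← Finset.card_sdiff_of_subset hsub]
  congr 1
  ext e
  simp only [Finset.mem_sdiff, Finset.mem_filter, Finset.mem_univ, true_and]
  omega

open Finset in
lemma coeff_eq_card (k : ℕ) :
    (((∑ i ∈ Finset.range p, (Polynomial.X : Polynomial ℕ) ^ i) ^ r).coeff k)
      = ((Fintype.piFinset fun _ : Fin r => Finset.range p).filter
          fun f : Fin r → ℕ => ∑ i, f i = k).card := by
  have h1 : ((∑ i ∈ Finset.range p, (Polynomial.X : Polynomial ℕ) ^ i) ^ r)
      = ∑ f ∈ Fintype.piFinset (fun _ : Fin r => Finset.range p),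
          (Polynomial.X : Polynomial ℕ) ^ (∑ i, f i) := by
    calc ((∑ i ∈ Finset.range p, (Polynomial.X : Polynomial ℕ) ^ i) ^ r)
        = ∏ _i : Fin r, (∑ j ∈ Finset.range p, (Polynomial.X : Polynomial ℕ) ^ j) := by
          rw [Finset.prod_const, Finset.card_univ, Fintype.card_fin]
      _ = ∑ f ∈ Fintype.piFinset (fun _ : Fin r => Finset.range p),
            ∏ i, (Polynomial.X : Polynomial ℕ) ^ f i := Finset.prod_univ_sum _ _
      _ = _ := Finset.sum_congr rfl fun f _ => Finset.prod_pow_eq_pow_sum _ _ _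
  rw [h1, Polynomial.finset_sum_coeff]
  simp_rw [Polynomial.coeff_X_pow]
  rw [Finset.sum_boole]
  simp only [Nat.cast_id]
  congr 1
  ext f
  simp [eq_comm]

lemma card_eq_card (k : ℕ) :
    (Finset.univ.filter fun e : Fin r → Fin p => ∑ i, (e i : ℕ) = k).card
      = ((Fintype.piFinset fun _ : Fin r => Finset.range p).filter
          fun f : Fin r → ℕ => ∑ i, f i = k).card := by
  refine Finset.card_bij' (fun e _ => fun i => (e i : ℕ))
    (fun f hf => fun i => ⟨f i, ?_⟩) ?_ ?_ ?_ ?_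
  · simp only [Finset.mem_filter, Fintype.mem_piFinset, Finset.mem_range] at hf
    exact hf.1 i
  · intro e he
    simp only [Finset.mem_filter, Finset.mem_univ, true_and] at he
    simp only [Finset.mem_filter, Fintype.mem_piFinset, Finset.mem_range]
    exact ⟨fun i => (e i).2, he⟩
  · intro f hf
    simp only [Finset.mem_filter, Fintype.mem_piFinset, Finset.mem_range] at hf
    simp only [Finset.mem_filter, Finset.mem_univ, true_and]
    exact hf.2
  · intro e _; rfl
  · intro f _; rfl

end Aux

theorem lambda_eq_Omega (p : ℕ) (hp : p.Prime) (r : ℕ) (hr : 1 ≤ r) (k : ℕ) :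
    lambda p (Multiplicative (Fin r → ZMod p)) k
      = (((∑ i ∈ Finset.range p, (X : Polynomial ℕ) ^ i) ^ r).coeff k) := by
  haveI : Fact p.Prime := ⟨hp⟩
  rw [show lambda p (Multiplicative (Fin r → ZMod p)) k = lambda p (Hh p r) k from rfl,
    lambda_eq_card, coeff_eq_card, card_eq_card]
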